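/- For all integers m ≥ 1 and n ≥ 1, the map sending an m-Dyck path of D_{m,n} to the 1-Dyck path of D_{1,mn} obtained by replacing each letter 1 by m consecutive letters 1 is an order isomorphism from D_{m,n} with the greedy m-Tamari order onto the subposet of D_{1,mn}, with the greedy 1-Tamari order, consisting of those 1-Dyck paths in which the length of every ascent (maximal run of consecutive letters 1) is a multiple of m; moreover this subset is an upper ideal of D_{1,mn} for the greedy 1-Tamari order (closed upward under the order). -/

import Mathlib

/-! Words over `Bool` encode lattice paths: `true` = up step (letter 1),
`false` = down step (letter 0). -/

/-- `w` is an `m`-Dyck word: the number of 0's is `m` times the number of 1's,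
and every prefix `p` satisfies `m·|p|₁ ≥ |p|₀`.  (The empty word is allowed;
an `m`-Dyck path of size `n` is an `m`-Dyck word with `n` letters 1.) -/
def IsDyck (m : ℕ) (w : List Bool) : Prop :=
  w.count false = m * w.count true ∧
  ∀ p : List Bool, p <+: w → p.count false ≤ m * p.count true

/-- Cover relation of the greedy `m`-Tamari order: swap a valley's down step with
the *longest* Dyck factor that follows it. -/
def GreedyCover (m : ℕ) (w w' : List Bool) : Prop :=
  ∃ u d v : List Bool, d ≠ [] ∧ IsDyck m d ∧
    w = u ++ false :: (d ++ v) ∧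
    w' = u ++ d ++ false :: v ∧
    ∀ d' : List Bool, d' <+: d ++ v → IsDyck m d' → d'.length ≤ d.length

/-- The greedy `m`-Tamari order (reflexive-transitive closure of the cover relation). -/
def GreedyLe (m : ℕ) : List Bool → List Bool → Prop :=
  Relation.ReflTransGen (GreedyCover m)

/-- Cover relation of the ordinary `m`-Tamari order: swap a valley's down step with
the *shortest nonempty* Dyck factor that follows it. -/
def OrdCover (m : ℕ) (w w' : List Bool) : Prop :=
  ∃ u d v : List Bool, d ≠ [] ∧ IsDyck m d ∧
    w = u ++ false :: (d ++ v) ∧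
    w' = u ++ d ++ false :: v ∧
    ∀ d' : List Bool, d' <+: d ++ v → IsDyck m d' → d' ≠ [] → d.length ≤ d'.length

/-- The ordinary `m`-Tamari order. -/
def OrdLe (m : ℕ) : List Bool → List Bool → Prop :=
  Relation.ReflTransGen (OrdCover m)

/-- The word `1·0^m` (a single peak), unit of the monoid `(D_m, *)`. -/
def peakWord (m : ℕ) : List Bool := true :: List.replicate m false

/-- Length of the final descent: the longest suffix of the form `0^k`. -/
def finalDescent (w : List Bool) : ℕ := (w.reverse.takeWhile (fun b => !b)).length

/-- The product `w₁ * w₂` on nonempty `m`-Dyck words: replace the rightmost peak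
(the last up step together with the `m` down steps following it) of `w₁` by `w₂`. -/
def star (m : ℕ) (w₁ w₂ : List Bool) : List Bool :=
  w₁.take (w₁.length - (finalDescent w₁ + 1)) ++ w₂ ++
    List.replicate (finalDescent w₁ - m) false

/-- Delete the last peak (the last up step and the `m` down steps following it). -/
def delPeak (m : ℕ) (w : List Bool) : List Bool :=
  w.take (w.length - (finalDescent w + 1)) ++ List.replicate (finalDescent w - m) false

/-- `D(w₀, …, w_m) = 1 (w₀ 0) (w₁ 0) ⋯ (w_{m-1} 0) w_m` : the canonical
decomposition of nonempty `m`-Dyck words (components indexed by `Fin (m+1)`). -/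
def Dpath (m : ℕ) (ws : Fin (m+1) → List Bool) : List Bool :=
  true :: ((List.ofFn fun j : Fin m => ws j.castSucc ++ [false]).flatten ++ ws (Fin.last m))

/-- Generators of the free monoid `(D_m, *)` : the words
`D(w₁,…,w_{i−1}, 1·0^m, ∅,…,∅)` with Dyck (possibly empty) components before
position `i`. -/
def IsGenerator (m : ℕ) (g : List Bool) : Prop :=
  ∃ i : Fin (m+1), ∃ ws : Fin (m+1) → List Bool,
    (∀ j, IsDyck m (ws j)) ∧ ws i = peakWord m ∧
    (∀ j : Fin (m+1), i < j → ws j = []) ∧ g = Dpath m ws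

/-- A prime (no contact) nonempty `m`-Dyck word: no proper nonempty prefix `p`
satisfies `m·|p|₁ = |p|₀`. -/
def IsPrimePath (m : ℕ) (w : List Bool) : Prop :=
  IsDyck m w ∧ w ≠ [] ∧
  ∀ p : List Bool, p <+: w → p ≠ [] → p ≠ w → p.count false ≠ m * p.count true

/-- Replace each letter 1 by `m` consecutive letters 1 (and keep the letters 0). -/
def embed (m : ℕ) (w : List Bool) : List Bool :=
  w.flatMap fun b => if b then List.replicate m true else [false]

/-- Every ascent (maximal run of letters 1) of `w` has length divisible by `m`. -/
def AscentsMultiple (m : ℕ) (w : List Bool) : Prop :=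
  ∀ (u v : List Bool) (k : ℕ), w = u ++ List.replicate k true ++ v →
    u.getLast? ≠ some true → v.head? ≠ some true → m ∣ k
namespace GTaux
open List

lemma embed_cons (m : ℕ) (b : Bool) (l : List Bool) :
    embed m (b :: l) = (if b then List.replicate m true else [false]) ++ embed m l := rfl


lemma embed_cons_true (m : ℕ) (l : List Bool) :
    embed m (true :: l) = List.replicate m true ++ embed m l := rfl

lemma embed_cons_false (m : ℕ) (l : List Bool) :
    embed m (false :: l) = false :: embed m l := rfl

lemma embed_append (m : ℕ) (l₁ l₂ : List Bool) :
    embed m (l₁ ++ l₂) = embed m l₁ ++ embed m l₂ := List.flatMap_append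

lemma count_true_embed (m : ℕ) (l : List Bool) : (embed m l).count true = m * l.count true := by
  induction l with
  | nil => simp [embed]
  | cons b t ih =>
    rw [embed_cons, List.count_append, ih, List.count_cons]
    cases b <;> simp [List.count_replicate] <;> ring

lemma count_false_embed (m : ℕ) (l : List Bool) : (embed m l).count false = l.count false := by
  induction l with
  | nil => simp [embed]
  | cons b t ih =>
    rw [embed_cons, List.count_append, ih, List.count_cons]
    cases b <;> simp [List.count_replicate] <;> omega

lemma embed_ne_nil (m : ℕ) (hm : 1 ≤ m) {l : List Bool} (h : l ≠ []) : embed m l ≠ [] := by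
  obtain ⟨m', rfl⟩ : ∃ m', m = m' + 1 := ⟨m - 1, by omega⟩
  cases l with
  | nil => exact absurd rfl h
  | cons b t =>
    rw [embed_cons]
    cases b <;> simp [List.replicate_succ]

lemma embed_injective (m : ℕ) (hm : 1 ≤ m) : ∀ {a b : List Bool}, embed m a = embed m b → a = b := by
  obtain ⟨m', rfl⟩ : ∃ m', m = m' + 1 := ⟨m - 1, by omega⟩
  intro a
  induction a with
  | nil =>
    intro b h
    cases b with
    | nil => rfl
    | cons c t => exact absurd h.symm (embed_ne_nil _ hm (by simp))
  | cons c t ih =>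
    intro b h
    cases b with
    | nil => exact absurd h (embed_ne_nil _ hm (by simp))
    | cons c' t' =>
      rw [embed_cons, embed_cons] at h
      cases c <;> cases c' <;> simp [List.replicate_succ] at h
      · rw [ih h]
      · rw [ih h]

lemma split (m : ℕ) (hm : 1 ≤ m) : ∀ (v p s : List Bool), embed m v = p ++ s →
    (∃ v₁ v₂, v = v₁ ++ v₂ ∧ p = embed m v₁ ∧ s = embed m v₂) ∨
    (∃ v₁ v₂ k, v = v₁ ++ true :: v₂ ∧ 0 < k ∧ k < m ∧
      p = embed m v₁ ++ List.replicate k true ∧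
      s = List.replicate (m - k) true ++ embed m v₂) := by
  intro v
  induction v with
  | nil =>
    intro p s h
    left
    have h' : p ++ s = [] := by rw [← h]; rfl
    rcases List.append_eq_nil_iff.mp h' with ⟨rfl, rfl⟩
    exact ⟨[], [], rfl, rfl, rfl⟩
  | cons b t ih =>
    intro p s h
    cases b with
    | false =>
      rw [embed_cons_false] at h
      cases p with
      | nil =>
        left
        refine ⟨[], false :: t, rfl, rfl, ?_⟩
        rw [List.nil_append] at h
        rw [embed_cons_false]
        exact h.symm
      | cons x xs =>
        rw [List.cons_append] at h
        obtain ⟨rfl, h2⟩ : false = x ∧ embed m t = xs ++ s := by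
          rw [List.cons.injEq] at h
          exact h
        rcases ih xs s h2 with ⟨v₁, v₂, h1, h3, h4⟩ | ⟨v₁, v₂, k, h1, h3, h4, h5, h6⟩
        · left
          exact ⟨false :: v₁, v₂, by rw [h1]; rfl, by rw [embed_cons_false, h3], h4⟩
        · right
          refine ⟨false :: v₁, v₂, k, by rw [h1]; rfl, h3, h4, ?_, h6⟩
          rw [embed_cons_false, h5]
          rfl
    | true =>
      rw [embed_cons_true] at h
      rcases List.append_eq_append_iff.mp h with ⟨a, ha1, ha2⟩ | ⟨c, hc1, hc2⟩
      · -- ha1 : p = replicate m true ++ a, ha2 : embed m t = a ++ s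
        rcases ih a s ha2 with ⟨v₁, v₂, h1, h3, h4⟩ | ⟨v₁, v₂, k, h1, h3, h4, h5, h6⟩
        · left
          exact ⟨true :: v₁, v₂, by rw [h1]; rfl,
            by rw [embed_cons_true, ha1, h3], h4⟩
        · right
          refine ⟨true :: v₁, v₂, k, by rw [h1]; rfl, h3, h4, ?_, h6⟩
          rw [embed_cons_true, ha1, h5, List.append_assoc]
      · -- hc1 : replicate m true = p ++ c, hc2 : s = c ++ embed m t
        have hplen : p.length ≤ m := by
          have := congrArg List.length hc1
          simp at this
          omega
        have hpmem : ∀ x ∈ p, x = true := by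
          intro x hx
          have : x ∈ List.replicate m true := by
            rw [hc1]; exact List.mem_append_left _ hx
          exact List.eq_of_mem_replicate this
        have hp : p = List.replicate p.length true := List.eq_replicate_iff.mpr ⟨rfl, hpmem⟩
        obtain ⟨k0, hk0m, rfl⟩ : ∃ k0, k0 ≤ m ∧ p = List.replicate k0 true :=
          ⟨p.length, hplen, hp⟩
        have hcmem : ∀ x ∈ c, x = true := by
          intro x hx
          have : x ∈ List.replicate m true := by
            rw [hc1]; exact List.mem_append_right _ hx
          exact List.eq_of_mem_replicate this
        have hclen : c.length = m - k0 := by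
          have := congrArg List.length hc1
          simp at this
          omega
        have hc : c = List.replicate (m - k0) true := List.eq_replicate_iff.mpr ⟨hclen, hcmem⟩
        by_cases h0 : k0 = 0
        · subst h0
          left
          refine ⟨[], true :: t, rfl, rfl, ?_⟩
          rw [hc2, hc, Nat.sub_zero, embed_cons_true]
        · by_cases hmm : k0 = m
          · subst hmm
            left
            refine ⟨[true], t, rfl, ?_, ?_⟩
            · simp [embed]
            · rw [hc2, hc, Nat.sub_self]
              rfl
          · right
            exact ⟨[], t, k0, rfl, by omega, by omega, rfl, by rw [hc2, hc]⟩

lemma isDyck_nil (m : ℕ) : IsDyck m [] := by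
  refine ⟨by simp, ?_⟩
  intro p hp
  rw [List.prefix_nil.mp hp]
  simp

lemma dyck_getLast (m : ℕ) (hm : 1 ≤ m) {w : List Bool} (hd : IsDyck m w) (hw : w ≠ []) :
    w.getLast? = some false := by
  rcases List.eq_nil_or_concat w with rfl | ⟨l, b, rfl⟩
  · exact absurd rfl hw
  simp only [List.concat_eq_append] at hd ⊢
  cases b
  · exact List.getLast?_concat
  · exfalso
    have h1 := hd.2 l (List.prefix_append l [true])
    have h2 := hd.1
    have hcf : (l ++ [true]).count false = l.count false := by simp
    have hct : (l ++ [true]).count true = l.count true + 1 := by simp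
    rw [hcf, hct, Nat.mul_succ] at h2
    generalize m * l.count true = A at h1 h2
    omega

lemma isDyck_embed_iff (m : ℕ) (hm : 1 ≤ m) (v : List Bool) :
    IsDyck 1 (embed m v) ↔ IsDyck m v := by
  constructor
  · intro h
    constructor
    · have h1 := h.1
      rwa [count_false_embed, count_true_embed, one_mul] at h1
    · intro p hp
      obtain ⟨r, hr⟩ := hp
      have hpe : embed m p <+: embed m v := ⟨embed m r, by rw [← embed_append, hr]⟩
      have h2 := h.2 _ hpe
      rwa [count_false_embed, count_true_embed, one_mul] at h2
  · intro h
    constructor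
    · rw [count_false_embed, count_true_embed, one_mul, h.1]
    · intro p hp
      obtain ⟨s, hs⟩ := hp
      rcases split m hm v p s hs.symm with ⟨v₁, v₂, hv, rfl, hs'⟩ | ⟨v₁, v₂, k, hv, hk0, hkm, rfl, hs'⟩
      · rw [count_false_embed, count_true_embed, one_mul]
        have h2 := h.2 v₁ ⟨v₂, hv.symm⟩
        have h3 : v₁.count true ≤ m * v₁.count true := Nat.le_mul_of_pos_left _ (by omega)
        omega
      · rw [one_mul, List.count_append, List.count_append,
          count_false_embed, count_true_embed, List.count_replicate, List.count_replicate]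
        simp only [beq_iff_eq]
        have h2 := h.2 v₁ ⟨true :: v₂, hv.symm⟩
        have h3 : v₁.count true ≤ m * v₁.count true := Nat.le_mul_of_pos_left _ (by omega)
        have h4 : m * v₁.count true ≤ v₁.count false + m * v₁.count true := Nat.le_add_left _ _
        generalize m * v₁.count true = A at h2 h3
        simp only [if_neg (by simp : ¬ (true = false)), if_pos rfl]
        omega

lemma cover_counts (m : ℕ) {w w' : List Bool} (h : GreedyCover m w w') (b : Bool) :
    w'.count b = w.count b := by
  obtain ⟨u, d, v, -, -, hw, hw', -⟩ := h
  subst hw hw'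
  cases b <;> simp [List.count_append, List.count_cons] <;> omega

lemma cover_isDyck (m : ℕ) {w w' : List Bool} (hd : IsDyck m w) (h : GreedyCover m w w') :
    IsDyck m w' := by
  refine ⟨by rw [cover_counts m h, cover_counts m h, hd.1], ?_⟩
  obtain ⟨u, d, v, hdne, hdd, hw, hw', hmax⟩ := h
  subst hw hw'
  intro p hp
  rw [List.append_assoc] at hp
  by_cases hlen : p.length ≤ u.length
  · have hpu : p <+: u := List.prefix_of_prefix_length_le hp (List.prefix_append u _) hlen
    exact hd.2 p (hpu.trans (List.prefix_append u _))
  · have hup : u <+: p := List.prefix_of_prefix_length_le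
      (List.prefix_append u _) hp (le_of_not_ge hlen)
    obtain ⟨q, rfl⟩ := hup
    have hq : q <+: d ++ false :: v := (List.prefix_append_right_inj u).mp hp
    by_cases hql : q.length ≤ d.length
    · have hqd : q <+: d := List.prefix_of_prefix_length_le hq (List.prefix_append d _) hql
      have hpre : (u ++ false :: q) <+: u ++ false :: (d ++ v) := by
        apply (List.prefix_append_right_inj u).mpr
        exact List.cons_prefix_cons.mpr ⟨rfl, hqd.trans (List.prefix_append d v)⟩
      have h2 := hd.2 _ hpre
      have e1 : (u ++ false :: q).count false = (u ++ q).count false + 1 := by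
        simp [List.count_append, List.count_cons]
        try omega
      have e2 : (u ++ false :: q).count true = (u ++ q).count true := by
        simp [List.count_append, List.count_cons]
        try omega
      rw [e1, e2] at h2
      omega
    · have hdq : d <+: q := List.prefix_of_prefix_length_le (List.prefix_append d _) hq (by omega)
      obtain ⟨r, rfl⟩ := hdq
      have hr : r <+: false :: v := (List.prefix_append_right_inj d).mp hq
      cases r with
      | nil =>
        have hpre : (u ++ false :: d) <+: u ++ false :: (d ++ v) := by
          apply (List.prefix_append_right_inj u).mpr
          exact List.cons_prefix_cons.mpr ⟨rfl, List.prefix_append d v⟩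
        have h2 := hd.2 _ hpre
        have e1 : (u ++ false :: d).count false = (u ++ (d ++ [])).count false + 1 := by
          simp [List.count_append, List.count_cons]
          try omega
        have e2 : (u ++ false :: d).count true = (u ++ (d ++ [])).count true := by
          simp [List.count_append, List.count_cons]
          try omega
        rw [e1, e2] at h2
        omega
      | cons x r' =>
        obtain ⟨hx, hr'⟩ := List.cons_prefix_cons.mp hr
        subst hx
        have hpre : (u ++ false :: (d ++ r')) <+: u ++ false :: (d ++ v) := by
          apply (List.prefix_append_right_inj u).mpr
          exact List.cons_prefix_cons.mpr ⟨rfl, (List.prefix_append_right_inj d).mpr hr'⟩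
        have h2 := hd.2 _ hpre
        have e1 : (u ++ false :: (d ++ r')).count false = (u ++ (d ++ false :: r')).count false := by
          simp [List.count_append, List.count_cons]; omega
        have e2 : (u ++ false :: (d ++ r')).count true = (u ++ (d ++ false :: r')).count true := by
          simp [List.count_append, List.count_cons]
          try omega
        rw [e1, e2] at h2
        exact h2

end GTaux
namespace GTaux

lemma replicate_last {k : ℕ} (hk : 0 < k) (u : List Bool) :
    (u ++ List.replicate k true).getLast? = some true := by
  rw [show List.replicate k true = List.replicate (k-1) true ++ [true] by
      rw [← List.replicate_succ']; congr 1; omega,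
    ← List.append_assoc, List.getLast?_concat]

lemma cover_embed (m : ℕ) (hm : 1 ≤ m) {w w' : List Bool} (h : GreedyCover m w w') :
    GreedyCover 1 (embed m w) (embed m w') := by
  obtain ⟨u, d, v, hdne, hdd, hw, hw', hmax⟩ := h
  subst hw hw'
  refine ⟨embed m u, embed m d, embed m v, embed_ne_nil m hm hdne,
    (isDyck_embed_iff m hm d).mpr hdd, ?_, ?_, ?_⟩
  · rw [embed_append, embed_cons_false, embed_append]
  · rw [embed_append, embed_append, embed_cons_false]
  · intro d'' hp hdk
    obtain ⟨s, hs⟩ := hp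
    have hsp : embed m (d ++ v) = d'' ++ s := by rw [embed_append]; exact hs.symm
    rcases split m hm _ _ _ hsp with ⟨v₁, v₂, hv, rfl, rfl⟩ | ⟨v₁, v₂, k, hv, hk0, hkm, rfl, rfl⟩
    · have hv₁ : IsDyck m v₁ := (isDyck_embed_iff m hm v₁).mp hdk
      have hlen : v₁.length ≤ d.length := hmax v₁ ⟨v₂, hv.symm⟩ hv₁
      have hpref : v₁ <+: d :=
        List.prefix_of_prefix_length_le ⟨v₂, hv.symm⟩ (List.prefix_append d v) hlen
      obtain ⟨e, rfl⟩ := hpref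
      rw [embed_append]
      simp
    · exfalso
      have hne : (embed m v₁ ++ List.replicate k true) ≠ [] := by
        intro hcon
        have := congrArg List.length hcon
        simp at this
        omega
      have hl := dyck_getLast 1 le_rfl hdk hne
      rw [replicate_last hk0] at hl
      simp at hl

lemma cover_embed_rev (m : ℕ) (hm : 1 ≤ m) {v w'' : List Bool}
    (h : GreedyCover 1 (embed m v) w'') :
    ∃ v', w'' = embed m v' ∧ GreedyCover m v v' := by
  obtain ⟨u, d, t, hdne, hdd, hw, hw', hmax⟩ := h
  rcases split m hm v u (false :: (d ++ t)) hw with ⟨u₀, v₂, hv, rfl, hs⟩ |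
    ⟨v₁, v₂, k, hv, hk0, hkm, hp, hs⟩
  · cases v₂ with
    | nil => simp [embed] at hs
    | cons b v₃ =>
      cases b with
      | true =>
        exfalso
        rw [embed_cons_true, show m = (m-1)+1 by omega, List.replicate_succ] at hs
        simp at hs
      | false =>
        rw [embed_cons_false] at hs
        have hs' : embed m v₃ = d ++ t := by
          injection hs with _ h2
          exact h2.symm
        rcases split m hm v₃ d t hs' with ⟨d₀, t₀, hv₃, rfl, rfl⟩ |
          ⟨w₁, w₂, k, hv₃, hk0, hkm, hpd, hst⟩
        · refine ⟨u₀ ++ d₀ ++ false :: t₀, ?_, u₀, d₀, t₀, ?_, ?_, ?_, rfl, ?_⟩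
          · rw [hw', embed_append, embed_append, embed_cons_false]
          · intro hcon; subst hcon; exact hdne rfl
          · exact (isDyck_embed_iff m hm d₀).mp hdd
          · rw [hv, hv₃]
          · intro d' hd' hdd'
            obtain ⟨e', he'⟩ := hd'
            have hp1 : embed m d' <+: embed m d₀ ++ embed m t₀ :=
              ⟨embed m e', by rw [← embed_append, ← embed_append, he']⟩
            have hlen := hmax (embed m d') hp1 ((isDyck_embed_iff m hm d').mpr hdd')
            by_contra hgt
            push_neg at hgt
            have hpref : d₀ <+: d' :=
              List.prefix_of_prefix_length_le ⟨t₀, rfl⟩ ⟨e', he'⟩ (le_of_lt hgt)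
            obtain ⟨e, rfl⟩ := hpref
            have hene : e ≠ [] := by
              intro hcon
              rw [hcon] at hgt
              simp at hgt
            have : (embed m (d₀ ++ e)).length = (embed m d₀).length + (embed m e).length := by
              rw [embed_append, List.length_append]
            have hepos : 0 < (embed m e).length :=
              List.length_pos_iff.mpr (embed_ne_nil m hm hene)
            omega
        · exfalso
          have hl := dyck_getLast 1 le_rfl hdd hdne
          rw [hpd, replicate_last hk0] at hl
          simp at hl
  · exfalso
    rw [show m - k = (m - k - 1) + 1 by omega, List.replicate_succ] at hs
    simp at hs

lemma ascents_embed (m : ℕ) (hm : 1 ≤ m) (v : List Bool) : AscentsMultiple m (embed m v) := by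
  intro u t k hw hu ht
  rcases split m hm v u (List.replicate k true ++ t) (by rw [hw, List.append_assoc]) with
    ⟨u₀, v₂, hv, rfl, hs⟩ | ⟨v₁, v₂, j, hv, hj0, hjm, rfl, hs⟩
  · rcases split m hm v₂ (List.replicate k true) t hs.symm with
      ⟨w₁, w₂, hv₂, hw₁, rfl⟩ | ⟨w₁, w₂, j, hv₂, hj0, hjm, hw₁, hs'⟩
    · refine ⟨w₁.count true, ?_⟩
      have hct := count_true_embed m w₁
      rw [← hw₁] at hct
      simpa [List.count_replicate] using hct
    · exfalso
      rw [hs', show m - j = (m-j-1)+1 by omega, List.replicate_succ] at ht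
      simp at ht
  · exact absurd (replicate_last hj0 (embed m v₁)) hu

lemma exists_run : ∀ w : List Bool, ∃ k r, w = List.replicate k true ++ r ∧ r.head? ≠ some true := by
  intro w
  induction w with
  | nil => exact ⟨0, [], rfl, by simp⟩
  | cons b t ih =>
    cases b with
    | false => exact ⟨0, false :: t, rfl, by simp⟩
    | true =>
      obtain ⟨k, r, h1, h2⟩ := ih
      exact ⟨k + 1, r, by rw [List.replicate_succ, h1]; rfl, h2⟩

lemma ascmul_tail_false (m : ℕ) {t : List Bool} (h : AscentsMultiple m (false :: t)) :
    AscentsMultiple m t := by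
  intro u v k hw hu hv
  refine h (false :: u) v k (by rw [hw]; rfl) ?_ hv
  cases u with
  | nil => simp
  | cons a u' => rwa [List.getLast?_cons_cons]

lemma ascmul_drop (m : ℕ) (hm : 1 ≤ m) {t : List Bool}
    (h : AscentsMultiple m (List.replicate m true ++ t)) : AscentsMultiple m t := by
  intro u v k hw hu hv
  cases u with
  | nil =>
    have hw2 : List.replicate m true ++ t = [] ++ List.replicate (m + k) true ++ v := by
      rw [hw, List.nil_append, List.nil_append, ← List.append_assoc, ← List.replicate_add]
    have hd := h [] v (m + k) hw2 (by simp) hv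
    exact (Nat.dvd_add_right (dvd_refl m)).mp hd
  | cons a u' =>
    refine h (List.replicate m true ++ (a :: u')) v k (by rw [hw]; simp) ?_ hv
    rw [List.getLast?_append_of_ne_nil (List.replicate m true) (List.cons_ne_nil a u')]
    exact hu

lemma exists_embed (m : ℕ) (hm : 1 ≤ m) :
    ∀ (N : ℕ) (w : List Bool), w.length ≤ N → AscentsMultiple m w → ∃ x, embed m x = w := by
  intro N
  induction N with
  | zero =>
    intro w hl _
    have : w = [] := List.eq_nil_of_length_eq_zero (by omega)
    exact ⟨[], by rw [this]; rfl⟩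
  | succ N ih =>
    intro w hl hasc
    obtain ⟨k, r, rfl, hr⟩ := exists_run w
    by_cases hk : k = 0
    · subst hk
      rw [List.replicate_zero, List.nil_append] at hasc hl ⊢
      cases r with
      | nil => exact ⟨[], rfl⟩
      | cons b r' =>
        cases b with
        | true => exact absurd rfl hr
        | false =>
          obtain ⟨x, hx⟩ := ih r' (by simp at hl; omega) (ascmul_tail_false m hasc)
          exact ⟨false :: x, by rw [embed_cons_false, hx]⟩
    · have hdvd : m ∣ k := hasc [] r k (by simp) (by simp) hr
      have hkm : m ≤ k := Nat.le_of_dvd (by omega) hdvd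
      have hw2 : List.replicate k true ++ r
          = List.replicate m true ++ (List.replicate (k - m) true ++ r) := by
        rw [← List.append_assoc, ← List.replicate_add]
        congr 2
        omega
      have hasc' : AscentsMultiple m (List.replicate (k - m) true ++ r) :=
        ascmul_drop m hm (by rw [← hw2]; exact hasc)
      have hlen : (List.replicate (k - m) true ++ r).length ≤ N := by
        simp at hl ⊢
        omega
      obtain ⟨x, hx⟩ := ih _ hlen hasc'
      exact ⟨true :: x, by rw [embed_cons_true, hx, ← hw2]⟩

lemma greedyLe_embed (m : ℕ) (hm : 1 ≤ m) {v w : List Bool} (h : GreedyLe m v w) :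
    GreedyLe 1 (embed m v) (embed m w) := by
  induction h with
  | refl => exact Relation.ReflTransGen.refl
  | tail _ hc ih => exact ih.tail (cover_embed m hm hc)

lemma greedyLe_embed_rev (m : ℕ) (hm : 1 ≤ m) {v y : List Bool}
    (h : GreedyLe 1 (embed m v) y) : ∃ x, y = embed m x ∧ GreedyLe m v x := by
  induction h with
  | refl => exact ⟨v, rfl, Relation.ReflTransGen.refl⟩
  | tail _ hc ih =>
    obtain ⟨x, rfl, hvx⟩ := ih
    obtain ⟨x', hx', hc'⟩ := cover_embed_rev m hm hc
    exact ⟨x', hx', hvx.tail hc'⟩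

end GTaux

/-- `embed` is an order isomorphism from `D_{m,n}` with the greedy
`m`-Tamari order onto the subposet of `D_{1,mn}` (greedy 1-Tamari order) consisting of
the paths all of whose ascents have length divisible by `m`; moreover this subset is an
upper ideal of `D_{1,mn}`. -/
theorem greedy_embed_order_iso (m n : ℕ) (hm : 1 ≤ m) (hn : 1 ≤ n) :
    -- `embed` is order-preserving and order-reflecting on `D_{m,n}`
    (∀ v w : List Bool, IsDyck m v → v.count true = n → IsDyck m w → w.count true = n →
        (GreedyLe m v w ↔ GreedyLe 1 (embed m v) (embed m w))) ∧
    -- `embed` is injective on `D_{m,n}`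
    (∀ v w : List Bool, IsDyck m v → v.count true = n → IsDyck m w → w.count true = n →
        embed m v = embed m w → v = w) ∧
    -- the image of `D_{m,n}` is contained in the prescribed subset of `D_{1,mn}`
    (∀ v : List Bool, IsDyck m v → v.count true = n →
        IsDyck 1 (embed m v) ∧ (embed m v).count true = m * n ∧ AscentsMultiple m (embed m v)) ∧
    -- every element of the prescribed subset of `D_{1,mn}` is in the image of `D_{m,n}`
    (∀ w' : List Bool, IsDyck 1 w' → w'.count true = m * n → AscentsMultiple m w' →
        ∃ v : List Bool, IsDyck m v ∧ v.count true = n ∧ embed m v = w') ∧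
    -- the subset is an upper ideal of `D_{1,mn}` for the greedy 1-Tamari order
    (∀ w w' : List Bool, IsDyck 1 w → w.count true = m * n → AscentsMultiple m w →
        GreedyLe 1 w w' →
        IsDyck 1 w' ∧ w'.count true = m * n ∧ AscentsMultiple m w') := by
  refine ⟨?_, ?_, ?_, ?_, ?_⟩
  · intro v w _ _ _ _
    constructor
    · exact GTaux.greedyLe_embed m hm
    · intro h
      obtain ⟨x, hx, hvx⟩ := GTaux.greedyLe_embed_rev m hm h
      rwa [GTaux.embed_injective m hm hx]
  · intro v w _ _ _ _ h
    exact GTaux.embed_injective m hm h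
  · intro v hv hc
    exact ⟨(GTaux.isDyck_embed_iff m hm v).mpr hv,
      by rw [GTaux.count_true_embed, hc], GTaux.ascents_embed m hm v⟩
  · intro w' hd hc hasc
    obtain ⟨x, rfl⟩ := GTaux.exists_embed m hm w'.length w' le_rfl hasc
    refine ⟨x, (GTaux.isDyck_embed_iff m hm x).mp hd, ?_, rfl⟩
    have := GTaux.count_true_embed m x
    rw [hc] at this
    exact Nat.eq_of_mul_eq_mul_left (by omega) this.symm
  · intro w w' hd hc hasc hle
    induction hle with
    | refl => exact ⟨hd, hc, hasc⟩
    | tail hbc hstep ih =>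
      obtain ⟨ih1, ih2, ih3⟩ := ih
      refine ⟨GTaux.cover_isDyck 1 ih1 hstep, ?_, ?_⟩
      · rw [GTaux.cover_counts 1 hstep true, ih2]
      · obtain ⟨x, hx⟩ := GTaux.exists_embed m hm _ _ le_rfl ih3
        rw [← hx] at hstep
        obtain ⟨x', rfl, -⟩ := GTaux.cover_embed_rev m hm hstep
        exact GTaux.ascents_embed m hm x'
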